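/- Let $f : \mathbb{R}^n \to \mathbb{R}$ be twice continuously differentiable with $L_H$-Lipschitz continuous Hessian. Let $x \in \mathbb{R}^n$, and let $H \in \mathbb{R}^{n \times n}$ be symmetric with smallest eigenvalue $\lambda < 0$. Suppose $p \in \mathbb{R}^n$ satisfies: $p^{\mathsf{T}} H p \leq \gamma \lambda \|p\|_2^2$ with $\gamma \in (0,1]$; $\|p\|_2 = \delta|\lambda|$ with $\delta > 0$; $\nabla f(x)^{\mathsf{T}} p \leq 0$; and $\|(H - \nabla^2 f(x))p\|_2 \leq \gamma_H |\lambda| \|p\|_2$ with $\gamma_H \in [0,\gamma)$. Then for any step size $0 < \beta \leq \frac{\gamma - \gamma_H}{\delta L_H}$, one has $f(x + \beta p) \leq f(x) - \frac{1}{3}(\gamma - \gamma_H)\beta^2 \delta^2 |\lambda|^3$. -/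

import Mathlib

open RealInnerProductSpace

theorem negative_curvature_step_decrease {n : ℕ} (f : EuclideanSpace ℝ (Fin n) → ℝ)
    (LH : ℝ) (hLH : 0 < LH) (hf : ContDiff ℝ 2 f)
    (hlip : ∀ x y, ‖fderiv ℝ (gradient f) x - fderiv ℝ (gradient f) y‖ ≤ LH * ‖x - y‖)
    (x p : EuclideanSpace ℝ (Fin n)) (H : EuclideanSpace ℝ (Fin n) →L[ℝ] EuclideanSpace ℝ (Fin n))
    (hHsymm : ∀ u v, ⟪H u, v⟫ = ⟪u, H v⟫)
    (lam : ℝ) (hlam : lam < 0)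
    (hmin : ∀ u, lam * ‖u‖ ^ 2 ≤ ⟪u, H u⟫)
    (heig : ∃ u : EuclideanSpace ℝ (Fin n), u ≠ 0 ∧ H u = lam • u)
    (γ δ γH : ℝ) (hγ0 : 0 < γ) (hγ1 : γ ≤ 1) (hδ : 0 < δ) (hγH0 : 0 ≤ γH) (hγH : γH < γ)
    (hp1 : ⟪p, H p⟫ ≤ γ * lam * ‖p‖ ^ 2)
    (hp2 : ‖p‖ = δ * |lam|)
    (hp3 : ⟪gradient f x, p⟫ ≤ 0)
    (hp4 : ‖H p - fderiv ℝ (gradient f) x p‖ ≤ γH * |lam| * ‖p‖)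
    (β : ℝ) (hβ0 : 0 < β) (hβ : β ≤ (γ - γH) / (δ * LH)) :
    f (x + β • p) ≤ f x - (1 / 3) * (γ - γH) * β ^ 2 * δ ^ 2 * |lam| ^ 3 := by
  classical
  set g := gradient f with hgdef
  set D := fderiv ℝ g with hDdef
  have hfd : Differentiable ℝ f := hf.differentiable (by norm_num)
  -- gradient is C¹
  have hgC : ContDiff ℝ 1 g := by
    have h1 : ContDiff ℝ 1 (fderiv ℝ f) := hf.fderiv_right (by norm_num)
    have h2 :=
      ((InnerProductSpace.toDual ℝ (EuclideanSpace ℝ (Fin n))).symm.toContinuousLinearEquiv.toContinuousLinearMap).contDiff.comp h1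
    exact h2
  have hgdiff : Differentiable ℝ g := hgC.differentiable (by norm_num)
  have hfg : ∀ y v, fderiv ℝ f y v = ⟪g y, v⟫ := by
    intro y v
    rw [hgdef]
    exact (InnerProductSpace.toDual_symm_apply).symm
  -- the curve
  have hc : ∀ t : ℝ, HasDerivAt (fun t : ℝ => x + t • p) p t := by
    intro t
    simpa using ((hasDerivAt_id t).smul_const p).const_add x
  -- first derivative
  have hφ : ∀ t : ℝ, HasDerivAt (fun t : ℝ => f (x + t • p)) ⟪p, g (x + t • p)⟫ t := by
    intro t
    have h1 := (hfd (x + t • p)).hasFDerivAt.comp_hasDerivAt t (hc t)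
    have h2 : fderiv ℝ f (x + t • p) p = ⟪p, g (x + t • p)⟫ := by
      rw [hfg, real_inner_comm]
    rw [← h2]
    exact h1
  -- second derivative
  have hφ1 : ∀ t : ℝ, HasDerivAt (fun t : ℝ => ⟪p, g (x + t • p)⟫) ⟪p, D (x + t • p) p⟫ t := by
    intro t
    have h1 : HasDerivAt (fun t : ℝ => g (x + t • p)) (D (x + t • p) p) t :=
      by have := (hgdiff (x + t • p)).hasFDerivAt.comp_hasDerivAt t (hc t); exact this
    have h2 := (innerSL ℝ p).hasFDerivAt.comp_hasDerivAt t h1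
    simpa [Function.comp_def] using h2
  -- Lipschitz bound for the second derivative along the ray
  have hlip2 : ∀ t : ℝ, 0 ≤ t →
      ⟪p, D (x + t • p) p⟫ ≤ ⟪p, D x p⟫ + LH * ‖p‖ ^ 3 * t := by
    intro t ht
    have h1 : ⟪p, D (x + t • p) p⟫ - ⟪p, D x p⟫ = ⟪p, (D (x + t • p) - D x) p⟫ := by
      simp [inner_sub_right]
    have h2 : ⟪p, (D (x + t • p) - D x) p⟫ ≤ ‖p‖ * ‖(D (x + t • p) - D x) p‖ :=
      real_inner_le_norm _ _
    have h3 : ‖(D (x + t • p) - D x) p‖ ≤ ‖D (x + t • p) - D x‖ * ‖p‖ :=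
      (D (x + t • p) - D x).le_opNorm p
    have h4 := hlip (x + t • p) x
    have h5 : ‖x + t • p - x‖ = t * ‖p‖ := by
      simp [norm_smul, abs_of_nonneg ht]
    rw [h5] at h4
    have hp0 : (0 : ℝ) ≤ ‖p‖ := norm_nonneg p
    nlinarith [mul_nonneg hp0 hp0, mul_le_mul_of_nonneg_left h4 hp0,
      mul_le_mul_of_nonneg_left h3 hp0]
  set a : ℝ := ⟪p, g x⟫ with hadef
  set b : ℝ := ⟪p, D x p⟫ with hbdef
  set M : ℝ := LH * ‖p‖ ^ 3 with hMdef
  have hM0 : 0 ≤ M := by positivity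
  -- first comparison function
  set χ1 : ℝ → ℝ := fun t => ⟪p, g (x + t • p)⟫ - (a + b * t + M * t ^ 2 / 2) with hχ1def
  have hχ1 : ∀ t : ℝ, HasDerivAt χ1 (⟪p, D (x + t • p) p⟫ - (b + M * t)) t := by
    intro t
    have hpoly : HasDerivAt (fun t : ℝ => a + b * t + M * t ^ 2 / 2) (b + M * t) t := by
      have h1 : HasDerivAt (fun t : ℝ => a + b * t + M * t ^ 2 / 2)
          (0 + b * 1 + M * (↑2 * t ^ 1) / 2) t :=
        ((hasDerivAt_const t a).add ((hasDerivAt_id t).const_mul b)).add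
          (((hasDerivAt_pow 2 t).const_mul M).div_const 2)
      convert h1 using 1
      ring
    exact (hφ1 t).sub hpoly
  have hχ1le : ∀ t ∈ Set.Icc (0 : ℝ) β, χ1 t ≤ 0 := by
    have hanti : AntitoneOn χ1 (Set.Icc (0 : ℝ) β) := by
      apply antitoneOn_of_deriv_nonpos (convex_Icc 0 β)
      · exact fun t _ => (hχ1 t).continuousAt.continuousWithinAt
      · exact fun t _ => (hχ1 t).differentiableAt.differentiableWithinAt
      · intro t ht
        rw [interior_Icc] at ht
        rw [(hχ1 t).deriv]
        have := hlip2 t ht.1.le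
        linarith
    intro t ht
    have h0 : χ1 0 = 0 := by
      simp [hχ1def, hadef]
    have := hanti (Set.left_mem_Icc.2 hβ0.le) ht ht.1
    rw [h0] at this
    exact this
  -- second comparison function
  set χ : ℝ → ℝ :=
    fun t => f (x + t • p) - (f x + a * t + b * t ^ 2 / 2 + M * t ^ 3 / 6) with hχdef
  have hχ : ∀ t : ℝ, HasDerivAt χ (χ1 t) t := by
    intro t
    have hpoly : HasDerivAt (fun t : ℝ => f x + a * t + b * t ^ 2 / 2 + M * t ^ 3 / 6)
        (a + b * t + M * t ^ 2 / 2) t := by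
      have h1 : HasDerivAt (fun t : ℝ => f x + a * t + b * t ^ 2 / 2 + M * t ^ 3 / 6)
          (0 + a * 1 + b * (↑2 * t ^ 1) / 2 + M * (↑3 * t ^ 2) / 6) t :=
        (((hasDerivAt_const t (f x)).add ((hasDerivAt_id t).const_mul a)).add
          (((hasDerivAt_pow 2 t).const_mul b).div_const 2)).add
          (((hasDerivAt_pow 3 t).const_mul M).div_const 6)
      convert h1 using 1
      ring
    exact (hφ t).sub hpoly
  have hχβ : χ β ≤ 0 := by
    have hanti : AntitoneOn χ (Set.Icc (0 : ℝ) β) := by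
      apply antitoneOn_of_deriv_nonpos (convex_Icc 0 β)
      · exact fun t _ => (hχ t).continuousAt.continuousWithinAt
      · exact fun t _ => (hχ t).differentiableAt.differentiableWithinAt
      · intro t ht
        rw [interior_Icc] at ht
        rw [(hχ t).deriv]
        exact hχ1le t ⟨ht.1.le, ht.2.le⟩
    have h0 : χ 0 = 0 := by
      simp [hχdef]
    have := hanti (Set.left_mem_Icc.2 hβ0.le) (Set.right_mem_Icc.2 hβ0.le) hβ0.le
    rw [h0] at this
    exact this
  have hTaylor : f (x + β • p) ≤ f x + a * β + b * β ^ 2 / 2 + M * β ^ 3 / 6 := by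
    have := hχβ
    rw [hχdef] at this
    simp only at this
    linarith
  -- bounds on a and b
  have ha : a ≤ 0 := by
    rw [hadef, real_inner_comm]
    exact hp3
  have hb : b ≤ γ * lam * ‖p‖ ^ 2 + γH * |lam| * ‖p‖ ^ 2 := by
    have h1 : b = ⟪p, H p⟫ - ⟪p, H p - D x p⟫ := by
      rw [hbdef]
      simp [inner_sub_right]
    have h2 : |⟪p, H p - D x p⟫| ≤ ‖p‖ * ‖H p - D x p‖ := abs_real_inner_le_norm _ _
    have h3 : ‖p‖ * ‖H p - D x p‖ ≤ ‖p‖ * (γH * |lam| * ‖p‖) :=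
      mul_le_mul_of_nonneg_left hp4 (norm_nonneg p)
    have h4 : -⟪p, H p - D x p⟫ ≤ ‖p‖ * (γH * |lam| * ‖p‖) := by
      have := (abs_le.1 (h2.trans h3)).1
      linarith
    have h5 : ‖p‖ * (γH * |lam| * ‖p‖) = γH * |lam| * ‖p‖ ^ 2 := by ring
    rw [h1]
    linarith
  -- final computation
  clear_value a b M χ1 χ
  clear hχ1 hχ hχ1le hχβ hφ hφ1 hlip2 hχ1def hχdef hadef hbdef
  have hL : |lam| = -lam := abs_of_neg hlam
  have hL0 : 0 < |lam| := abs_pos.2 hlam.ne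
  have hβδ : β * (δ * LH) ≤ γ - γH := (le_div_iff₀ (by positivity)).mp hβ
  have hbb : b ≤ -((γ - γH) * δ ^ 2 * |lam| ^ 3) := by
    rw [hp2] at hb
    rw [hL] at hb ⊢
    have heq : γ * lam * (δ * -lam) ^ 2 + γH * -lam * (δ * -lam) ^ 2
        = -((γ - γH) * δ ^ 2 * (-lam) ^ 3) := by ring
    linarith only [hb, heq]
  have hMM : M = LH * δ ^ 3 * |lam| ^ 3 := by
    rw [hMdef, hp2]; ring
  have hM6 : M * β ^ 3 / 6 ≤ (γ - γH) * δ ^ 2 * |lam| ^ 3 * β ^ 2 / 6 := by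
    rw [hMM]
    have h1 : LH * δ ^ 3 * |lam| ^ 3 * β ^ 3 = (β * (δ * LH)) * (δ ^ 2 * |lam| ^ 3 * β ^ 2) := by
      ring
    have h2 : (β * (δ * LH)) * (δ ^ 2 * |lam| ^ 3 * β ^ 2) ≤
        (γ - γH) * (δ ^ 2 * |lam| ^ 3 * β ^ 2) := by
      apply mul_le_mul_of_nonneg_right hβδ
      positivity
    rw [h1]
    linarith
  have haβ : a * β ≤ 0 := mul_nonpos_of_nonpos_of_nonneg ha hβ0.le
  have hbβ : b * β ^ 2 / 2 ≤ -((γ - γH) * δ ^ 2 * |lam| ^ 3) * β ^ 2 / 2 := by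
    have := mul_le_mul_of_nonneg_right hbb (sq_nonneg β)
    linarith
  calc f (x + β • p) ≤ f x + a * β + b * β ^ 2 / 2 + M * β ^ 3 / 6 := hTaylor
    _ ≤ f x + 0 + (-((γ - γH) * δ ^ 2 * |lam| ^ 3) * β ^ 2 / 2) +
        ((γ - γH) * δ ^ 2 * |lam| ^ 3 * β ^ 2 / 6) := by linarith
    _ = f x - (1 / 3) * (γ - γH) * β ^ 2 * δ ^ 2 * |lam| ^ 3 := by ring
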